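/- Let S₁, S₂ ⊆ ℕ be finite nonempty sets that are collision-free, meaning the map S₁ × S₂ → ℕ, (s₁, s₂) ↦ s₁ + s₂, is injective (equivalently |S₁ + S₂| = |S₁|·|S₂|). Then z_{S₁+S₂} ≤ z_{S₁} + z_{S₂}, where S₁ + S₂ = {s₁ + s₂ : s₁ ∈ S₁, s₂ ∈ S₂} is the sumset. -/

import Mathlib

open Real Finset

/-- `g_S(t) = ∑_{e ∈ S} t^(2e)`. -/
noncomputable def gS (S : Finset ℕ) (t : ℝ) : ℝ := ∑ e ∈ S, t ^ (2 * e)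

/-- `h_S(t) = ∑_{e ∈ S} e² t^(2e-2)` (the term for `e = 0` being `0`). -/
noncomputable def hS (S : Finset ℕ) (t : ℝ) : ℝ := ∑ e ∈ S, (e : ℝ) ^ 2 * t ^ (2 * e - 2)

/-- `q_S(t) = ∑_{e ∈ S} e t^(2e-1)` (the term for `e = 0` being `0`). -/
noncomputable def qS (S : Finset ℕ) (t : ℝ) : ℝ := ∑ e ∈ S, (e : ℝ) * t ^ (2 * e - 1)

/-- `E_S(t) = g_S(t) h_S(t) - q_S(t)²`. -/
noncomputable def ES (S : Finset ℕ) (t : ℝ) : ℝ := gS S t * hS S t - qS S t ^ 2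

/-- The expected number of real zeros in `(0,1)`, given by the Edelman–Kostlan integral. -/
noncomputable def zS (S : Finset ℕ) : ℝ :=
  (1 / Real.pi) * ∫ t in (0 : ℝ)..1, Real.sqrt (ES S t) / gS S t

/- ### Auxiliary lemmas -/

section Aux
open Pointwise

lemma sqrt_add_le_aux {x y : ℝ} (hx : 0 ≤ x) (hy : 0 ≤ y) :
    Real.sqrt (x + y) ≤ Real.sqrt x + Real.sqrt y := by
  have h : x + y ≤ (Real.sqrt x + Real.sqrt y) ^ 2 := by
    nlinarith [Real.sq_sqrt hx, Real.sq_sqrt hy, Real.sqrt_nonneg x, Real.sqrt_nonneg y]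
  calc Real.sqrt (x + y) ≤ Real.sqrt ((Real.sqrt x + Real.sqrt y) ^ 2) := Real.sqrt_le_sqrt h
    _ = Real.sqrt x + Real.sqrt y := Real.sqrt_sq (by positivity)

lemma sum_sumset {S₁ S₂ : Finset ℕ}
    (hcf : ∀ a ∈ S₁, ∀ b ∈ S₂, ∀ a' ∈ S₁, ∀ b' ∈ S₂, a + b = a' + b' → a = a' ∧ b = b')
    (F : ℕ → ℝ) : ∑ e ∈ S₁ + S₂, F e = ∑ a ∈ S₁, ∑ b ∈ S₂, F (a + b) := by
  rw [Finset.add_def, Finset.sum_image, Finset.sum_product]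
  intro p hp q hq hpq
  have hp : p.1 ∈ S₁ ∧ p.2 ∈ S₂ := by simpa using hp
  have hq : q.1 ∈ S₁ ∧ q.2 ∈ S₂ := by simpa using hq
  have := hcf p.1 hp.1 p.2 hp.2 q.1 hq.1 q.2 hq.2 hpq
  exact Prod.ext this.1 this.2

-- term-level factorizations
lemma g_term (t : ℝ) (a b : ℕ) : t ^ (2 * (a + b)) = t ^ (2 * a) * t ^ (2 * b) := by
  rw [← pow_add]; ring_nf

lemma q_term (t : ℝ) (a b : ℕ) :
    ((a + b : ℕ) : ℝ) * t ^ (2 * (a + b) - 1)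
      = ((a : ℝ) * t ^ (2 * a - 1)) * t ^ (2 * b) + t ^ (2 * a) * ((b : ℝ) * t ^ (2 * b - 1)) := by
  rcases Nat.eq_zero_or_pos a with ha | ha
  · rcases Nat.eq_zero_or_pos b with hb | hb
    · subst ha; subst hb; simp
    · subst ha
      have : 2 * (0 + b) - 1 = 2 * 0 + (2 * b - 1) := by omega
      rw [this, pow_add]; push_cast; ring
  · rcases Nat.eq_zero_or_pos b with hb | hb
    · subst hb
      have : 2 * (a + 0) - 1 = (2 * a - 1) + 2 * 0 := by omega
      rw [this, pow_add]; push_cast; ring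
    · have hA : t ^ (2 * a) = t ^ (2 * a - 1) * t := by
        rw [← pow_succ]; congr 1; omega
      have hB : t ^ (2 * b) = t ^ (2 * b - 1) * t := by
        rw [← pow_succ]; congr 1; omega
      have hC : t ^ (2 * (a + b) - 1) = t ^ (2 * a - 1) * (t ^ (2 * b - 1) * t) := by
        rw [← pow_succ, ← pow_add]; congr 1; omega
      rw [hA, hB, hC]
      push_cast
      ring

lemma h_term (t : ℝ) (a b : ℕ) :
    ((a + b : ℕ) : ℝ) ^ 2 * t ^ (2 * (a + b) - 2)
      = ((a : ℝ) ^ 2 * t ^ (2 * a - 2)) * t ^ (2 * b) + t ^ (2 * a) * ((b : ℝ) ^ 2 * t ^ (2 * b - 2))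
        + 2 * ((a : ℝ) * t ^ (2 * a - 1)) * ((b : ℝ) * t ^ (2 * b - 1)) := by
  rcases Nat.eq_zero_or_pos a with ha | ha
  · subst ha
    rcases Nat.eq_zero_or_pos b with hb | hb
    · subst hb; simp
    · have : 2 * (0 + b) - 2 = 2 * 0 + (2 * b - 2) := by omega
      rw [this, pow_add]; push_cast; ring
  · rcases Nat.eq_zero_or_pos b with hb | hb
    · subst hb
      have : 2 * (a + 0) - 2 = (2 * a - 2) + 2 * 0 := by omega
      rw [this, pow_add]; push_cast; ring
    · have hA : t ^ (2 * a) = t ^ (2 * a - 2) * t ^ 2 := by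
        rw [← pow_add]; congr 1; omega
      have hA1 : t ^ (2 * a - 1) = t ^ (2 * a - 2) * t := by
        rw [← pow_succ]; congr 1; omega
      have hB : t ^ (2 * b) = t ^ (2 * b - 2) * t ^ 2 := by
        rw [← pow_add]; congr 1; omega
      have hB1 : t ^ (2 * b - 1) = t ^ (2 * b - 2) * t := by
        rw [← pow_succ]; congr 1; omega
      have hC : t ^ (2 * (a + b) - 2) = t ^ (2 * a - 2) * (t ^ (2 * b - 2) * t ^ 2) := by
        rw [← pow_add, ← pow_add]; congr 1; omega
      rw [hA, hA1, hB, hB1, hC]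
      push_cast
      ring

lemma gS_add {S₁ S₂ : Finset ℕ}
    (hcf : ∀ a ∈ S₁, ∀ b ∈ S₂, ∀ a' ∈ S₁, ∀ b' ∈ S₂, a + b = a' + b' → a = a' ∧ b = b')
    (t : ℝ) : gS (S₁ + S₂) t = gS S₁ t * gS S₂ t := by
  rw [gS, sum_sumset hcf, gS, gS, Finset.sum_mul_sum]
  exact Finset.sum_congr rfl fun a _ => Finset.sum_congr rfl fun b _ => g_term t a b

lemma qS_add {S₁ S₂ : Finset ℕ}
    (hcf : ∀ a ∈ S₁, ∀ b ∈ S₂, ∀ a' ∈ S₁, ∀ b' ∈ S₂, a + b = a' + b' → a = a' ∧ b = b')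
    (t : ℝ) : qS (S₁ + S₂) t = qS S₁ t * gS S₂ t + gS S₁ t * qS S₂ t := by
  rw [qS, sum_sumset hcf]
  have : ∀ a ∈ S₁, ∑ b ∈ S₂, ((a + b : ℕ) : ℝ) * t ^ (2 * (a + b) - 1)
      = ((a : ℝ) * t ^ (2 * a - 1)) * gS S₂ t + t ^ (2 * a) * qS S₂ t := by
    intro a _
    rw [gS, qS, Finset.mul_sum, Finset.mul_sum, ← Finset.sum_add_distrib]
    exact Finset.sum_congr rfl fun b _ => q_term t a b
  rw [Finset.sum_congr rfl this, Finset.sum_add_distrib, ← Finset.sum_mul, ← Finset.sum_mul]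
  simp only [gS, qS]

lemma hS_add {S₁ S₂ : Finset ℕ}
    (hcf : ∀ a ∈ S₁, ∀ b ∈ S₂, ∀ a' ∈ S₁, ∀ b' ∈ S₂, a + b = a' + b' → a = a' ∧ b = b')
    (t : ℝ) : hS (S₁ + S₂) t
      = hS S₁ t * gS S₂ t + gS S₁ t * hS S₂ t + 2 * qS S₁ t * qS S₂ t := by
  rw [hS, sum_sumset hcf]
  have : ∀ a ∈ S₁, ∑ b ∈ S₂, ((a + b : ℕ) : ℝ) ^ 2 * t ^ (2 * (a + b) - 2)
      = ((a : ℝ) ^ 2 * t ^ (2 * a - 2)) * gS S₂ t + t ^ (2 * a) * hS S₂ t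
        + 2 * ((a : ℝ) * t ^ (2 * a - 1)) * qS S₂ t := by
    intro a _
    rw [gS, hS, qS, Finset.mul_sum, Finset.mul_sum, Finset.mul_sum, ← Finset.sum_add_distrib,
      ← Finset.sum_add_distrib]
    exact Finset.sum_congr rfl fun b _ => h_term t a b
  rw [Finset.sum_congr rfl this, Finset.sum_add_distrib, Finset.sum_add_distrib,
    ← Finset.sum_mul, ← Finset.sum_mul, ← Finset.sum_mul]
  simp only [gS, hS, qS, ← Finset.mul_sum]

lemma ES_add {S₁ S₂ : Finset ℕ}
    (hcf : ∀ a ∈ S₁, ∀ b ∈ S₂, ∀ a' ∈ S₁, ∀ b' ∈ S₂, a + b = a' + b' → a = a' ∧ b = b')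
    (t : ℝ) : ES (S₁ + S₂) t = gS S₂ t ^ 2 * ES S₁ t + gS S₁ t ^ 2 * ES S₂ t := by
  simp only [ES, gS_add hcf, qS_add hcf, hS_add hcf]; ring

-- E in terms of u, v
lemma gS_eq (S : Finset ℕ) (t : ℝ) : gS S t = ∑ e ∈ S, (t ^ e) ^ 2 := by
  unfold gS; exact Finset.sum_congr rfl fun e _ => by rw [← pow_mul]; ring_nf

lemma hS_eq (S : Finset ℕ) (t : ℝ) :
    hS S t = ∑ e ∈ S, ((e : ℝ) * t ^ (e - 1)) ^ 2 := by
  unfold hS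
  refine Finset.sum_congr rfl fun e _ => ?_
  rw [mul_pow, ← pow_mul]
  congr 2
  omega

lemma qS_eq (S : Finset ℕ) (t : ℝ) :
    qS S t = ∑ e ∈ S, t ^ e * ((e : ℝ) * t ^ (e - 1)) := by
  unfold qS
  refine Finset.sum_congr rfl fun e _ => ?_
  rcases Nat.eq_zero_or_pos e with he | he
  · subst he; simp
  · rw [← mul_assoc, mul_comm (t ^ e) (e : ℝ), mul_assoc, ← pow_add]
    congr 2
    omega

lemma ES_nonneg (S : Finset ℕ) (t : ℝ) : 0 ≤ ES S t := by
  rw [ES, gS_eq, hS_eq, qS_eq, sub_nonneg]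
  exact Finset.sum_mul_sq_le_sq_mul_sq S _ _

-- Lagrange identity
lemma lagrange (s : Finset ℕ) (u v : ℕ → ℝ) :
    (∑ e ∈ s, u e ^ 2) * (∑ e ∈ s, v e ^ 2) - (∑ e ∈ s, u e * v e) ^ 2
      = (∑ e ∈ s, ∑ e' ∈ s, (u e * v e' - u e' * v e) ^ 2) / 2 := by
  have hsplit : ∑ e ∈ s, ∑ e' ∈ s, (u e * v e' - u e' * v e) ^ 2
      = (∑ e ∈ s, ∑ e' ∈ s, (u e * v e') ^ 2) + (∑ e ∈ s, ∑ e' ∈ s, (u e' * v e) ^ 2)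
        - 2 * ∑ e ∈ s, ∑ e' ∈ s, (u e * v e) * (u e' * v e') := by
    rw [Finset.mul_sum, ← Finset.sum_add_distrib, ← Finset.sum_sub_distrib]
    refine Finset.sum_congr rfl fun e _ => ?_
    rw [Finset.mul_sum, ← Finset.sum_add_distrib, ← Finset.sum_sub_distrib]
    exact Finset.sum_congr rfl fun e' _ => by ring
  have h1 : ∑ e ∈ s, ∑ e' ∈ s, (u e * v e') ^ 2
      = (∑ e ∈ s, u e ^ 2) * (∑ e ∈ s, v e ^ 2) := by
    rw [Finset.sum_mul_sum]
    exact Finset.sum_congr rfl fun e _ => Finset.sum_congr rfl fun e' _ => by ring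
  have h2 : ∑ e ∈ s, ∑ e' ∈ s, (u e' * v e) ^ 2
      = (∑ e ∈ s, u e ^ 2) * (∑ e ∈ s, v e ^ 2) := by
    rw [Finset.sum_comm]
    rw [Finset.sum_mul_sum]
    exact Finset.sum_congr rfl fun e _ => Finset.sum_congr rfl fun e' _ => by ring
  have h3 : ∑ e ∈ s, ∑ e' ∈ s, (u e * v e) * (u e' * v e')
      = (∑ e ∈ s, u e * v e) ^ 2 := by
    rw [sq, Finset.sum_mul_sum]
  rw [hsplit, h1, h2, h3]
  ring

-- bound on each Lagrange term
lemma term_bound (t : ℝ) (ht0 : 0 < t) (ht1 : t ≤ 1) (m e e' : ℕ)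
    (hme : m ≤ e) (hme' : m ≤ e') :
    (t ^ e * ((e' : ℝ) * t ^ (e' - 1)) - t ^ e' * ((e : ℝ) * t ^ (e - 1))) ^ 2
      ≤ ((e' : ℝ) - (e : ℝ)) ^ 2 * (t ^ (2 * m)) ^ 2 := by
  rcases eq_or_ne e e' with rfl | hne
  · simp [sq_nonneg]
  · have hval : t ^ e * ((e' : ℝ) * t ^ (e' - 1)) - t ^ e' * ((e : ℝ) * t ^ (e - 1))
        = ((e' : ℝ) - (e : ℝ)) * t ^ (e + e' - 1) := by
      have hA : t ^ e * ((e' : ℝ) * t ^ (e' - 1)) = (e' : ℝ) * t ^ (e + e' - 1) := by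
        rcases Nat.eq_zero_or_pos e' with h | h
        · subst h; simp
        · rw [← mul_assoc, mul_comm (t ^ e) (e' : ℝ), mul_assoc, ← pow_add]
          congr 2; omega
      have hB : t ^ e' * ((e : ℝ) * t ^ (e - 1)) = (e : ℝ) * t ^ (e + e' - 1) := by
        rcases Nat.eq_zero_or_pos e with h | h
        · subst h; simp
        · rw [← mul_assoc, mul_comm (t ^ e') (e : ℝ), mul_assoc, ← pow_add]
          congr 2; omega
      rw [hA, hB]; ring
    rw [hval, mul_pow, ← pow_mul, ← pow_mul]
    have hexp : 2 * m * 2 ≤ (e + e' - 1) * 2 := by omega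
    have := pow_le_pow_of_le_one ht0.le ht1 hexp
    nlinarith [sq_nonneg ((e' : ℝ) - (e : ℝ)), pow_nonneg ht0.le ((e + e' - 1) * 2)]

lemma gS_pos (S : Finset ℕ) (hS : S.Nonempty) {t : ℝ} (ht : 0 < t) : 0 < gS S t :=
  Finset.sum_pos (fun e _ => pow_pos ht _) hS

lemma gS_lower (S : Finset ℕ) (hS : S.Nonempty) {t : ℝ} (ht : 0 ≤ t) :
    t ^ (2 * S.min' hS) ≤ gS S t :=
  Finset.single_le_sum (f := fun e => t ^ (2 * e)) (fun e _ => pow_nonneg ht _)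
    (S.min'_mem hS)

-- uniform bound on the integrand on (0,1]
lemma integrand_bound (S : Finset ℕ) (hS : S.Nonempty) {t : ℝ} (ht0 : 0 < t) (ht1 : t ≤ 1) :
    Real.sqrt (ES S t) / gS S t
      ≤ Real.sqrt ((∑ e ∈ S, ∑ e' ∈ S, ((e' : ℝ) - (e : ℝ)) ^ 2) / 2) := by
  set m := S.min' hS with hm
  set K := (∑ e ∈ S, ∑ e' ∈ S, ((e' : ℝ) - (e : ℝ)) ^ 2) / 2 with hK
  have hKnn : 0 ≤ K := by positivity
  have hg : 0 < gS S t := gS_pos S hS ht0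
  have hE : ES S t ≤ K * gS S t ^ 2 := by
    have hlag : ES S t = (∑ e ∈ S, ∑ e' ∈ S,
        (t ^ e * ((e' : ℝ) * t ^ (e' - 1)) - t ^ e' * ((e : ℝ) * t ^ (e - 1))) ^ 2) / 2 := by
      rw [ES, gS_eq, hS_eq, qS_eq]
      exact lagrange S _ _
    have hsum : (∑ e ∈ S, ∑ e' ∈ S,
        (t ^ e * ((e' : ℝ) * t ^ (e' - 1)) - t ^ e' * ((e : ℝ) * t ^ (e - 1))) ^ 2)
        ≤ ∑ e ∈ S, ∑ e' ∈ S, ((e' : ℝ) - (e : ℝ)) ^ 2 * (t ^ (2 * m)) ^ 2 := by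
      refine Finset.sum_le_sum fun e he => Finset.sum_le_sum fun e' he' => ?_
      exact term_bound t ht0 ht1 m e e' (S.min'_le e he) (S.min'_le e' he')
    have hfac : ∑ e ∈ S, ∑ e' ∈ S, ((e' : ℝ) - (e : ℝ)) ^ 2 * (t ^ (2 * m)) ^ 2
        = (2 * K) * (t ^ (2 * m)) ^ 2 := by
      simp only [← Finset.sum_mul, hK]; ring
    have hgl : (t ^ (2 * m)) ^ 2 ≤ gS S t ^ 2 := by
      have := gS_lower S hS ht0.le
      nlinarith [pow_nonneg ht0.le (2 * m)]
    calc ES S t ≤ K * (t ^ (2 * m)) ^ 2 := by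
          rw [hlag]; linarith [hsum.trans_eq hfac]
      _ ≤ K * gS S t ^ 2 := by nlinarith
  have hsqrt : Real.sqrt (ES S t) ≤ Real.sqrt K * gS S t := by
    calc Real.sqrt (ES S t) ≤ Real.sqrt (K * gS S t ^ 2) := Real.sqrt_le_sqrt hE
      _ = Real.sqrt K * gS S t := by
          rw [Real.sqrt_mul hKnn, Real.sqrt_sq hg.le]
  rw [div_le_iff₀ hg]
  linarith

lemma continuous_gS (S : Finset ℕ) : Continuous (gS S) := by
  unfold gS; exact continuous_finset_sum _ fun e _ => continuous_pow _

lemma continuous_ES (S : Finset ℕ) : Continuous (ES S) := by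
  unfold ES gS hS qS
  apply Continuous.sub
  · exact (continuous_finset_sum _ fun e _ => continuous_pow _).mul
      (continuous_finset_sum _ fun e _ => (continuous_const.mul (continuous_pow _)))
  · exact (continuous_finset_sum _ fun e _ => continuous_const.mul (continuous_pow _)).pow 2

lemma integrand_integrable (S : Finset ℕ) (hS : S.Nonempty) :
    IntervalIntegrable (fun t => Real.sqrt (ES S t) / gS S t) MeasureTheory.volume 0 1 := by
  rw [intervalIntegrable_iff_integrableOn_Ioc_of_le zero_le_one]
  set C := Real.sqrt ((∑ e ∈ S, ∑ e' ∈ S, ((e' : ℝ) - (e : ℝ)) ^ 2) / 2) with hC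
  have hmeas : MeasureTheory.AEStronglyMeasurable (fun t => Real.sqrt (ES S t) / gS S t)
      (MeasureTheory.volume.restrict (Set.Ioc (0:ℝ) 1)) := by
    apply Measurable.aestronglyMeasurable
    exact ((Real.continuous_sqrt.comp (continuous_ES S)).measurable).div
      (continuous_gS S).measurable
  apply MeasureTheory.Integrable.mono' (g := fun _ => C)
    (MeasureTheory.integrable_const C) hmeas
  rw [MeasureTheory.ae_restrict_iff' measurableSet_Ioc]
  filter_upwards with t ht
  rw [Real.norm_eq_abs, abs_of_nonneg]
  · exact integrand_bound S hS ht.1 ht.2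
  · exact div_nonneg (Real.sqrt_nonneg _) (gS_pos S hS ht.1).le

lemma pointwise_bound {S₁ S₂ : Finset ℕ} (h₁ : S₁.Nonempty) (h₂ : S₂.Nonempty)
    (hcf : ∀ a ∈ S₁, ∀ b ∈ S₂, ∀ a' ∈ S₁, ∀ b' ∈ S₂, a + b = a' + b' → a = a' ∧ b = b')
    {t : ℝ} (ht : 0 < t) :
    Real.sqrt (ES (S₁ + S₂) t) / gS (S₁ + S₂) t
      ≤ Real.sqrt (ES S₁ t) / gS S₁ t + Real.sqrt (ES S₂ t) / gS S₂ t := by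
  have hg1 : 0 < gS S₁ t := gS_pos S₁ h₁ ht
  have hg2 : 0 < gS S₂ t := gS_pos S₂ h₂ ht
  have hE1 := ES_nonneg S₁ t
  have hE2 := ES_nonneg S₂ t
  rw [ES_add hcf, gS_add hcf]
  have hstep : Real.sqrt (gS S₂ t ^ 2 * ES S₁ t + gS S₁ t ^ 2 * ES S₂ t)
      ≤ gS S₂ t * Real.sqrt (ES S₁ t) + gS S₁ t * Real.sqrt (ES S₂ t) := by
    calc Real.sqrt (gS S₂ t ^ 2 * ES S₁ t + gS S₁ t ^ 2 * ES S₂ t)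
        ≤ Real.sqrt (gS S₂ t ^ 2 * ES S₁ t) + Real.sqrt (gS S₁ t ^ 2 * ES S₂ t) :=
          sqrt_add_le_aux (by positivity) (by positivity)
      _ = gS S₂ t * Real.sqrt (ES S₁ t) + gS S₁ t * Real.sqrt (ES S₂ t) := by
          rw [Real.sqrt_mul (sq_nonneg _), Real.sqrt_mul (sq_nonneg _),
            Real.sqrt_sq hg2.le, Real.sqrt_sq hg1.le]
  rw [div_le_iff₀ (by positivity)]
  calc Real.sqrt (gS S₂ t ^ 2 * ES S₁ t + gS S₁ t ^ 2 * ES S₂ t)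
      ≤ gS S₂ t * Real.sqrt (ES S₁ t) + gS S₁ t * Real.sqrt (ES S₂ t) := hstep
    _ = (Real.sqrt (ES S₁ t) / gS S₁ t + Real.sqrt (ES S₂ t) / gS S₂ t) * (gS S₁ t * gS S₂ t) := by
        field_simp

end Aux

open Pointwise in
theorem stmt7 (S₁ S₂ : Finset ℕ) (h₁ : S₁.Nonempty) (h₂ : S₂.Nonempty)
    (hcf : ∀ a ∈ S₁, ∀ b ∈ S₂, ∀ a' ∈ S₁, ∀ b' ∈ S₂, a + b = a' + b' → a = a' ∧ b = b') :
    zS (S₁ + S₂) ≤ zS S₁ + zS S₂ := by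
  have hne : (S₁ + S₂).Nonempty := h₁.add h₂
  have hI := integrand_integrable (S₁ + S₂) hne
  have hI1 := integrand_integrable S₁ h₁
  have hI2 := integrand_integrable S₂ h₂
  have hint : (∫ t in (0:ℝ)..1, Real.sqrt (ES (S₁ + S₂) t) / gS (S₁ + S₂) t)
      ≤ (∫ t in (0:ℝ)..1, Real.sqrt (ES S₁ t) / gS S₁ t)
        + (∫ t in (0:ℝ)..1, Real.sqrt (ES S₂ t) / gS S₂ t) := by
    rw [← intervalIntegral.integral_add hI1 hI2]
    rw [intervalIntegral.integral_of_le zero_le_one, intervalIntegral.integral_of_le zero_le_one]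
    apply MeasureTheory.setIntegral_mono_on
    · exact (intervalIntegrable_iff_integrableOn_Ioc_of_le zero_le_one).mp hI
    · exact (intervalIntegrable_iff_integrableOn_Ioc_of_le zero_le_one).mp (hI1.add hI2)
    · exact measurableSet_Ioc
    · intro t ht
      exact pointwise_bound h₁ h₂ hcf ht.1
  unfold zS
  rw [← mul_add]
  apply mul_le_mul_of_nonneg_left hint
  positivity
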